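/- arXiv:1705.07387 — 2 statements merged into one kernel-verified Lean document; each statement's English description precedes it below -/
import Mathlib

section
/- Let u(t) = √2·sech(t) and v(t) = −√2·sech(t)·tanh(t) be the homoclinic orbit of the system u̇ = v, v̇ = u − u³. Then for every real λ, the Melnikov integral ∫_ℝ (λ − u(t)²)·v(t)² dt converges and equals (4/3)·λ − 16/15. In particular, this integral vanishes if and only if λ = 4/5. -/
open Real Filter MeasureTheory Topology

lemma tanh_hasDerivAt (t : ℝ) : HasDerivAt Real.tanh (1 / Real.cosh t ^ 2) t := by
  have hc : Real.cosh t ≠ 0 := (Real.cosh_pos t).ne'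
  have h := (Real.hasDerivAt_sinh t).div (Real.hasDerivAt_cosh t) hc
  have heq : (Real.cosh t * Real.cosh t - Real.sinh t * Real.sinh t) / Real.cosh t ^ 2
      = 1 / Real.cosh t ^ 2 := by
    rw [show Real.cosh t * Real.cosh t - Real.sinh t * Real.sinh t
        = Real.cosh t ^ 2 - Real.sinh t ^ 2 by ring, Real.cosh_sq_sub_sinh_sq]
  rw [heq] at h
  exact h.congr_of_eventuallyEq (by
    filter_upwards with x using (Real.tanh_eq_sinh_div_cosh x))

lemma tanh_eq_aux (t : ℝ) :
    Real.tanh t = (Real.exp (2 * t) - 1) / (Real.exp (2 * t) + 1) := by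
  have he : Real.exp (2 * t) = Real.exp t * Real.exp t := by
    rw [two_mul, Real.exp_add]
  have hc : Real.cosh t ≠ 0 := (Real.cosh_pos t).ne'
  have h1 : Real.exp (2 * t) + 1 > 0 := by positivity
  rw [Real.tanh_eq_sinh_div_cosh, Real.sinh_eq, Real.cosh_eq, Real.exp_neg]
  have hx : Real.exp t ≠ 0 := (Real.exp_pos t).ne'
  field_simp [he]
  rw [he]; ring

lemma tanh_tendsto_atTop : Tendsto Real.tanh atTop (𝓝 1) := by
  have h2 : Tendsto (fun t : ℝ => Real.exp (2 * t) + 1) atTop atTop :=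
    (Real.tendsto_exp_atTop.comp (tendsto_id.const_mul_atTop two_pos)).atTop_add
      tendsto_const_nhds
  have h : Tendsto (fun t : ℝ => 1 - 2 / (Real.exp (2 * t) + 1)) atTop (𝓝 (1 - 0)) :=
    tendsto_const_nhds.sub (Tendsto.div_atTop tendsto_const_nhds h2)
  rw [sub_zero] at h
  refine h.congr fun t => ?_
  have h1 : Real.exp (2 * t) + 1 > 0 := by positivity
  rw [tanh_eq_aux]
  field_simp
  ring

lemma tanh_tendsto_atBot : Tendsto Real.tanh atBot (𝓝 (-1)) := by
  have h2 : Tendsto (fun t : ℝ => Real.exp (2 * t)) atBot (𝓝 0) :=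
    Real.tendsto_exp_atBot.comp (tendsto_id.const_mul_atBot two_pos)
  have h : Tendsto (fun t : ℝ => (Real.exp (2 * t) - 1) / (Real.exp (2 * t) + 1)) atBot
      (𝓝 ((0 - 1) / (0 + 1))) :=
    (h2.sub tendsto_const_nhds).div (h2.add tendsto_const_nhds) (by norm_num)
  norm_num at h
  exact h.congr fun t => (tanh_eq_aux t).symm

lemma tanh_sq_le_one (t : ℝ) : Real.tanh t ^ 2 ≤ 1 := by
  have hc := Real.cosh_pos t
  have h := Real.cosh_sq t
  rw [Real.tanh_eq_sinh_div_cosh, div_pow, div_le_one (by positivity)]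
  nlinarith

lemma sech_sq_le (t : ℝ) : 1 / Real.cosh t ^ 2 ≤ (1 + t ^ 2)⁻¹ := by
  have hc := Real.cosh_pos t
  have h := Real.cosh_sq t
  have hs : t ^ 2 ≤ Real.sinh t ^ 2 := by
    rcases le_or_gt 0 t with ht | ht
    · have := Real.self_le_sinh_iff.mpr ht
      nlinarith
    · have h2 : (-t) ≤ Real.sinh (-t) := Real.self_le_sinh_iff.mpr (by linarith)
      rw [Real.sinh_neg] at h2
      nlinarith
  rw [one_div, inv_le_inv₀ (by positivity) (by positivity)]
  nlinarith
/-- The Melnikov integral along the homoclinic orbit `u(t) = √2 sech t`,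
`v(t) = −√2 sech t tanh t` of `u̇ = v`, `v̇ = u − u³`:
for every `λ`, `∫_ℝ (λ − u²)v² dt` converges and equals `(4/3)λ − 16/15`,
vanishing iff `λ = 4/5`. -/
theorem stmt_14 :
    let u : ℝ → ℝ := fun t => Real.sqrt 2 * (1 / Real.cosh t)
    let v : ℝ → ℝ := fun t => -(Real.sqrt 2 * (1 / Real.cosh t) * Real.tanh t)
    ∀ lam : ℝ,
      MeasureTheory.Integrable (fun t : ℝ => (lam - u t ^ 2) * v t ^ 2) ∧
      (∫ t : ℝ, (lam - u t ^ 2) * v t ^ 2) = 4 / 3 * lam - 16 / 15 ∧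
      ((∫ t : ℝ, (lam - u t ^ 2) * v t ^ 2) = 0 ↔ lam = 4 / 5) := by
  intro u v lam
  have hsq : Real.sqrt 2 ^ 2 = 2 := Real.sq_sqrt (by norm_num)
  have hu2 : ∀ t, u t ^ 2 = 2 * (1 / Real.cosh t ^ 2) := by
    intro t
    show (Real.sqrt 2 * (1 / Real.cosh t)) ^ 2 = _
    rw [mul_pow, hsq, div_pow, one_pow]
  have hv2 : ∀ t, v t ^ 2 = 2 * (1 / Real.cosh t ^ 2) * Real.tanh t ^ 2 := by
    intro t
    show (-(Real.sqrt 2 * (1 / Real.cosh t) * Real.tanh t)) ^ 2 = _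
    rw [neg_pow, mul_pow, mul_pow, hsq, div_pow, one_pow]
    ring
  have hT2 : ∀ t, Real.tanh t ^ 2 = 1 - 1 / Real.cosh t ^ 2 := by
    intro t
    have hc : Real.cosh t ≠ 0 := (Real.cosh_pos t).ne'
    have hid := Real.cosh_sq_sub_sinh_sq t
    rw [Real.tanh_eq_sinh_div_cosh, div_pow]
    field_simp
    linarith
  -- the antiderivative
  set F : ℝ → ℝ := fun t => (2 * lam / 3 - 4 / 3) * Real.tanh t ^ 3 + 4 / 5 * Real.tanh t ^ 5
    with hF
  have hderiv : ∀ t, HasDerivAt F ((lam - u t ^ 2) * v t ^ 2) t := by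
    intro t
    have h3 : HasDerivAt (fun s => Real.tanh s ^ 3)
        ((3 : ℕ) * Real.tanh t ^ 2 * (1 / Real.cosh t ^ 2)) t := by
      simpa using (tanh_hasDerivAt t).fun_pow 3
    have h5 : HasDerivAt (fun s => Real.tanh s ^ 5)
        ((5 : ℕ) * Real.tanh t ^ 4 * (1 / Real.cosh t ^ 2)) t := by
      simpa using (tanh_hasDerivAt t).fun_pow 5
    have h := (h3.const_mul (2 * lam / 3 - 4 / 3)).fun_add (h5.const_mul (4 / 5 : ℝ))
    refine h.congr_deriv (Eq.symm ?_)
    rw [hu2, hv2]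
    push_cast
    linear_combination
      (-4 * (1 / Real.cosh t ^ 2) * Real.tanh t ^ 2) * hT2 t
  -- integrability
  have hcont : Continuous fun t : ℝ => (lam - u t ^ 2) * v t ^ 2 := by
    have hc : Continuous fun t : ℝ => 1 / Real.cosh t :=
      continuous_const.div Real.continuous_cosh fun x => (Real.cosh_pos x).ne'
    have ht : Continuous Real.tanh :=
      continuous_iff_continuousAt.2 fun x => (tanh_hasDerivAt x).continuousAt
    show Continuous fun t : ℝ =>
      (lam - (Real.sqrt 2 * (1 / Real.cosh t)) ^ 2) *
        (-(Real.sqrt 2 * (1 / Real.cosh t) * Real.tanh t)) ^ 2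
    exact (continuous_const.sub ((continuous_const.mul hc).pow 2)).mul
      (((continuous_const.mul hc).mul ht).neg.pow 2)
  have hint : MeasureTheory.Integrable fun t : ℝ => (lam - u t ^ 2) * v t ^ 2 := by
    have hg : MeasureTheory.Integrable fun t : ℝ => (2 * |lam| + 4) * (1 + t ^ 2)⁻¹ :=
      integrable_inv_one_add_sq.const_mul _
    refine hg.mono' hcont.aestronglyMeasurable (Filter.Eventually.of_forall fun t => ?_)
    have hS0 : (0:ℝ) ≤ 1 / Real.cosh t ^ 2 := by positivity
    have hSle := sech_sq_le t
    have hTle := tanh_sq_le_one t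
    have hT0 : (0:ℝ) ≤ Real.tanh t ^ 2 := sq_nonneg _
    have hpos : (0:ℝ) < (1 + t ^ 2)⁻¹ := by positivity
    have h1 : |lam - u t ^ 2| ≤ |lam| + 2 := by
      rw [hu2]
      calc |lam - 2 * (1 / Real.cosh t ^ 2)| ≤ |lam| + |2 * (1 / Real.cosh t ^ 2)| :=
            abs_sub _ _
        _ ≤ |lam| + 2 := by
            have hS0' : (0:ℝ) ≤ 1 / Real.cosh t ^ 2 := by positivity
            rw [abs_of_nonneg (by linarith : (0:ℝ) ≤ 2 * (1 / Real.cosh t ^ 2))]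
            have : 1 / Real.cosh t ^ 2 ≤ 1 := by
              have := Real.one_le_cosh t
              rw [one_div]
              rw [inv_le_one_iff₀]
              right; nlinarith
            linarith
    have h2 : |v t ^ 2| ≤ 2 * (1 + t ^ 2)⁻¹ := by
      rw [hv2, abs_of_nonneg (by positivity)]
      nlinarith
    calc ‖(lam - u t ^ 2) * v t ^ 2‖ = |lam - u t ^ 2| * |v t ^ 2| := by
          rw [Real.norm_eq_abs, abs_mul]
      _ ≤ (|lam| + 2) * (2 * (1 + t ^ 2)⁻¹) :=
          mul_le_mul h1 h2 (abs_nonneg _) (by positivity)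
      _ = (2 * |lam| + 4) * (1 + t ^ 2)⁻¹ := by ring
  -- limits
  have htop : Filter.Tendsto F Filter.atTop
      (𝓝 ((2 * lam / 3 - 4 / 3) * 1 ^ 3 + 4 / 5 * 1 ^ 5)) :=
    ((tanh_tendsto_atTop.pow 3).const_mul _).add ((tanh_tendsto_atTop.pow 5).const_mul _)
  have hbot : Filter.Tendsto F Filter.atBot
      (𝓝 ((2 * lam / 3 - 4 / 3) * (-1) ^ 3 + 4 / 5 * (-1) ^ 5)) :=
    ((tanh_tendsto_atBot.pow 3).const_mul _).add ((tanh_tendsto_atBot.pow 5).const_mul _)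
  have hval : (∫ t : ℝ, (lam - u t ^ 2) * v t ^ 2) = 4 / 3 * lam - 16 / 15 := by
    rw [MeasureTheory.integral_of_hasDerivAt_of_tendsto hderiv hint hbot htop]
    ring
  refine ⟨hint, hval, ?_⟩
  rw [hval]
  constructor
  · intro h; linarith
  · intro h; rw [h]; norm_num
end

section
/- Consider the rotated asymmetric system ẋ = y, ẏ = (r − p)x + (r − 1)y − (s + y)x² − x³ with s > 0. Its equilibria are the points (x*, 0) with x*·(x*² + s·x* − (r − p)) = 0, and the Jacobian matrix at such an equilibrium is [[0, 1], [r − p − 2s·x* − 3(x*)², r − 1 − (x*)²]]. (i) At the equilibrium x* = 0, this matrix equals [[0, 1], [0, 0]] (zero is an eigenvalue of algebraic multiplicity two) if and only if (p, r) = (1, 1). (ii) There exists a nonzero equilibrium x* (a root of x² + sx − (r − p) = 0) at which the matrix equals [[0, 1], [0, 0]] if and only if (p, r) = (1 + s²/2, 1 + s²/4), in which case x* = −s/2. Thus the asymmetric model has exactly two Bogdanov–Takens points, Q₁ = (1, 1) and Q₂ = (1 + s²/2, 1 + s²/4). -/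
open ContinuousLinearMap in
lemma stmt_18_deriv_aux (p r s xs : ℝ) :
    HasFDerivAt
      (fun w : Fin 2 → ℝ =>
        ![w 1, (r - p) * w 0 + (r - 1) * w 1 - (s + w 1) * w 0 ^ 2 - w 0 ^ 3])
      (LinearMap.toContinuousLinearMap
        (Matrix.mulVecLin !![(0:ℝ), 1; r - p - 2 * s * xs - 3 * xs ^ 2, r - 1 - xs ^ 2]))
      ![xs, 0] := by
  set pt : Fin 2 → ℝ := ![xs, 0] with hpt
  have ha : HasFDerivAt (fun w : Fin 2 → ℝ => w 0)
      (proj (R := ℝ) (φ := fun _ : Fin 2 => ℝ) 0) pt := hasFDerivAt_apply 0 pt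
  have hb : HasFDerivAt (fun w : Fin 2 → ℝ => w 1)
      (proj (R := ℝ) (φ := fun _ : Fin 2 => ℝ) 1) pt := hasFDerivAt_apply 1 pt
  apply hasFDerivAt_pi''
  intro i
  fin_cases i
  · show HasFDerivAt (fun w : Fin 2 → ℝ => w 1) _ _
    refine hb.congr_fderiv ?_
    ext v
    simp [Matrix.mulVecLin, Matrix.mulVec, dotProduct, Fin.sum_univ_two]
  · show HasFDerivAt
      (fun w : Fin 2 → ℝ => (r - p) * w 0 + (r - 1) * w 1 - (s + w 1) * w 0 ^ 2 - w 0 ^ 3) _ _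
    have hD := (((ha.const_mul (r - p)).add (hb.const_mul (r - 1))).sub
      (((hasFDerivAt_const s pt).add hb).mul (ha.mul ha))).sub ((ha.mul ha).mul ha)
    have hD' := hD.congr_of_eventuallyEq (Filter.Eventually.of_forall
      (fun w : Fin 2 → ℝ => by ring :
        ∀ w : Fin 2 → ℝ, (r - p) * w 0 + (r - 1) * w 1 - (s + w 1) * w 0 ^ 2 - w 0 ^ 3
          = (r - p) * w 0 + (r - 1) * w 1 - (s + w 1) * (w 0 * w 0) - w 0 * w 0 * w 0))
    refine hD'.congr_fderiv ?_
    ext v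
    have h0 : pt 0 = xs := rfl
    have h1 : pt 1 = 0 := rfl
    simp [Matrix.mulVecLin, Matrix.mulVec, dotProduct, Fin.sum_univ_two, h0, h1]
    ring

lemma stmt_18_mat_eq (a b : ℝ) :
    !![(0:ℝ), 1; a, b] = !![(0:ℝ), 1; 0, 0] ↔ a = 0 ∧ b = 0 := by
  constructor
  · intro h
    constructor
    · have := congrFun (congrFun h 1) 0
      simpa using this
    · have := congrFun (congrFun h 1) 1
      simpa using this
  · rintro ⟨rfl, rfl⟩
    rfl

/-- Bogdanov–Takens points of the rotated asymmetric model `ẋ = y`,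
`ẏ = (r − p)x + (r − 1)y − (s + y)x² − x³` (`s > 0`): equilibria are the `(x*, 0)` with
`x*(x*² + sx* − (r − p)) = 0`, the Jacobian there is
`[[0, 1], [r − p − 2sx* − 3x*², r − 1 − x*²]]`; it equals `[[0, 1], [0, 0]]` at `x* = 0`
iff `(p, r) = (1, 1)`, and at some nonzero equilibrium iff
`(p, r) = (1 + s²/2, 1 + s²/4)`, in which case `x* = −s/2`. -/
theorem stmt_18 (p r s : ℝ) (hs : 0 < s) :
    let M : ℝ → Matrix (Fin 2) (Fin 2) ℝ :=
      fun xs => !![(0 : ℝ), 1; r - p - 2 * s * xs - 3 * xs ^ 2, r - 1 - xs ^ 2]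
    (∀ x y : ℝ,
      (y = 0 ∧ (r - p) * x + (r - 1) * y - (s + y) * x ^ 2 - x ^ 3 = 0) ↔
        (y = 0 ∧ x * (x ^ 2 + s * x - (r - p)) = 0)) ∧
    (∀ xs : ℝ, xs * (xs ^ 2 + s * xs - (r - p)) = 0 →
      HasFDerivAt
        (fun w : Fin 2 → ℝ =>
          ![w 1, (r - p) * w 0 + (r - 1) * w 1 - (s + w 1) * w 0 ^ 2 - w 0 ^ 3])
        (LinearMap.toContinuousLinearMap (Matrix.mulVecLin (M xs))) ![xs, 0]) ∧
    (M 0 = !![(0 : ℝ), 1; 0, 0] ↔ (p = 1 ∧ r = 1)) ∧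
    ((∃ xs : ℝ, xs ≠ 0 ∧ xs ^ 2 + s * xs - (r - p) = 0 ∧ M xs = !![(0 : ℝ), 1; 0, 0]) ↔
      (p = 1 + s ^ 2 / 2 ∧ r = 1 + s ^ 2 / 4)) ∧
    (∀ xs : ℝ, xs ≠ 0 → xs ^ 2 + s * xs - (r - p) = 0 →
      M xs = !![(0 : ℝ), 1; 0, 0] → xs = -s / 2) := by
  intro M
  have hM : ∀ xs : ℝ, M xs = !![(0:ℝ), 1; 0, 0] ↔
      r - p - 2 * s * xs - 3 * xs ^ 2 = 0 ∧ r - 1 - xs ^ 2 = 0 := by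
    intro xs; exact stmt_18_mat_eq _ _
  have key : ∀ xs : ℝ, xs ≠ 0 → xs ^ 2 + s * xs - (r - p) = 0 →
      M xs = !![(0:ℝ), 1; 0, 0] → xs = -s / 2 := by
    intro xs hx he hm
    obtain ⟨h1, h2⟩ := (hM xs).1 hm
    -- from he and h1: s*xs + 2*xs^2 = 0, so xs*(s+2xs)=0
    have h3 : xs * (s + 2 * xs) = 0 := by nlinarith [he, h1]
    rcases mul_eq_zero.1 h3 with h | h
    · exact absurd h hx
    · linarith
  refine ⟨?_, ?_, ?_, ?_, key⟩
  · intro x y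
    constructor
    · rintro ⟨rfl, h⟩
      exact ⟨rfl, by nlinarith [h]⟩
    · rintro ⟨rfl, h⟩
      exact ⟨rfl, by nlinarith [h]⟩
  · intro xs _
    exact stmt_18_deriv_aux p r s xs
  · rw [hM 0]
    constructor
    · rintro ⟨h1, h2⟩
      constructor <;> nlinarith
    · rintro ⟨rfl, rfl⟩
      norm_num
  · constructor
    · rintro ⟨xs, hx, he, hm⟩
      have hxs : xs = -s / 2 := key xs hx he hm
      obtain ⟨h1, h2⟩ := (hM xs).1 hm
      subst hxs
      constructor <;> nlinarith
    · rintro ⟨rfl, rfl⟩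
      exact ⟨-s / 2, by intro h; nlinarith [hs], by ring, (hM _).2 ⟨by ring, by ring⟩⟩
end
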